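/- Let t : ℝ^d → ℝ be a polynomial of degree p with ∇t(0) ≠ 0 and let ψ : I → ℝ^d (I ⊂ ℝ_{≥0} an interval) be a maximal minimizer curve of the regularized models m_σ(s) = t(s) + (σ/(p+1))‖s‖^{p+1}. Then the following are equivalent: (1) there is c ≥ 0 with (c,∞) ⊂ I (persistence); (2) (c,∞) ⊂ I for some c and lim_{σ→∞} ψ(σ) = 0; (3) inf_{σ∈I} ‖ψ(σ)‖ = 0. -/

import Mathlib

open Finset

set_option synthInstance.maxHeartbeats 1000000
set_option maxHeartbeats 2000000


lemma norm_smul_clm {E : Type*} [NormedAddCommGroup E] [NormedSpace ℝ E]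
    (c : ℝ) (f : E →L[ℝ] ℝ) : ‖c • f‖ = |c| * ‖f‖ := by
  rw [← Real.norm_eq_abs]; exact norm_smul c f

/-- The explicit Fréchet derivative of the evaluation of a multivariate polynomial. -/
noncomputable def polyDeriv (d : ℕ) (P : MvPolynomial (Fin d) ℝ)
    (x : EuclideanSpace ℝ (Fin d)) : EuclideanSpace ℝ (Fin d) →L[ℝ] ℝ :=
  ∑ m ∈ P.support, P.coeff m •
    ∑ i : Fin d, (∏ j ∈ Finset.univ.erase i, (x j) ^ (m j)) •
      (((m i : ℝ) * (x i) ^ (m i - 1)) •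
        (EuclideanSpace.proj i : EuclideanSpace ℝ (Fin d) →L[ℝ] ℝ))

lemma proj_hasFDerivAt (d : ℕ) (i : Fin d) (x : EuclideanSpace ℝ (Fin d)) :
    HasFDerivAt (fun y : EuclideanSpace ℝ (Fin d) => y i)
      (EuclideanSpace.proj i : EuclideanSpace ℝ (Fin d) →L[ℝ] ℝ) x :=
  (EuclideanSpace.proj (𝕜 := ℝ) i).hasFDerivAt

lemma polyDeriv_hasFDerivAt (d : ℕ) (P : MvPolynomial (Fin d) ℝ)
    (x : EuclideanSpace ℝ (Fin d)) :
    HasFDerivAt (fun y : EuclideanSpace ℝ (Fin d) => MvPolynomial.eval (fun i => y i) P)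
      (polyDeriv d P x) x := by
  have h : (fun y : EuclideanSpace ℝ (Fin d) => MvPolynomial.eval (fun i => y i) P)
      = fun y : EuclideanSpace ℝ (Fin d) =>
        ∑ m ∈ P.support, P.coeff m * ∏ i : Fin d, (y i) ^ (m i) := by
    funext y; rw [MvPolynomial.eval_eq']
  rw [h]
  apply HasFDerivAt.fun_sum
  intro m _
  have hfac : ∀ i : Fin d, HasFDerivAt (fun y : EuclideanSpace ℝ (Fin d) => (y i) ^ (m i))
      (((m i : ℝ) * (x i) ^ (m i - 1)) •
        (EuclideanSpace.proj i : EuclideanSpace ℝ (Fin d) →L[ℝ] ℝ)) x := by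
    intro i
    exact (hasDerivAt_pow (m i) (x i)).comp_hasFDerivAt x (proj_hasFDerivAt d i x)
  have hprod : HasFDerivAt (fun y : EuclideanSpace ℝ (Fin d) => ∏ i : Fin d, (y i) ^ (m i))
      (∑ i ∈ Finset.univ, (∏ j ∈ Finset.univ.erase i, (x j) ^ (m j)) •
        (((m i : ℝ) * (x i) ^ (m i - 1)) •
          (EuclideanSpace.proj i : EuclideanSpace ℝ (Fin d) →L[ℝ] ℝ))) x :=
    HasFDerivAt.finset_prod (fun i _ => hfac i)
  exact hprod.const_mul (P.coeff m)

lemma abs_coord_le (d : ℕ) (x : EuclideanSpace ℝ (Fin d)) (i : Fin d) : |x i| ≤ ‖x‖ := by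
  rw [EuclideanSpace.norm_eq]
  have h1 : ‖x i‖ ^ 2 ≤ ∑ j : Fin d, ‖x j‖ ^ 2 :=
    Finset.single_le_sum (f := fun j => ‖x j‖ ^ 2) (fun _ _ => sq_nonneg _) (mem_univ i)
  calc |x i| = Real.sqrt (‖x i‖ ^ 2) := by
        rw [Real.sqrt_sq_eq_abs, Real.norm_eq_abs, abs_abs]
    _ ≤ Real.sqrt (∑ j : Fin d, ‖x j‖ ^ 2) := Real.sqrt_le_sqrt h1

lemma norm_proj_le (d : ℕ) (i : Fin d) :
    ‖(EuclideanSpace.proj i : EuclideanSpace ℝ (Fin d) →L[ℝ] ℝ)‖ ≤ 1 := by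
  refine ContinuousLinearMap.opNorm_le_bound _ zero_le_one fun v => ?_
  rw [one_mul]
  have : (EuclideanSpace.proj i : EuclideanSpace ℝ (Fin d) →L[ℝ] ℝ) v = v i := rfl
  rw [this, Real.norm_eq_abs]
  exact abs_coord_le d v i

lemma sum_coords_le (d p : ℕ) (P : MvPolynomial (Fin d) ℝ) (hdeg : P.totalDegree = p)
    {m : Fin d →₀ ℕ} (hm : m ∈ P.support) : ∑ j : Fin d, m j ≤ p := by
  have h1 : ∑ j : Fin d, m j = ∑ j ∈ m.support, m j := by
    refine (Finset.sum_subset (Finset.subset_univ _) fun j _ hj => ?_).symm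
    exact Finsupp.notMem_support_iff.mp hj
  have h2 : (m.sum fun _ e => e) ≤ P.totalDegree := MvPolynomial.le_totalDegree hm
  rw [hdeg] at h2
  rw [h1]
  exact h2

lemma polyDeriv_norm_le (d p : ℕ) (P : MvPolynomial (Fin d) ℝ) (hdeg : P.totalDegree = p)
    (x : EuclideanSpace ℝ (Fin d)) :
    ‖polyDeriv d P x‖ ≤ ((p : ℝ) * ∑ m ∈ P.support, |P.coeff m|) * max 1 ‖x‖ ^ (p - 1) := by
  set M := max 1 ‖x‖ with hMdef
  have hM1 : (1:ℝ) ≤ M := le_max_left _ _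
  have hM0 : (0:ℝ) ≤ M := zero_le_one.trans hM1
  have hxM : ∀ j : Fin d, |x j| ≤ M := fun j => (abs_coord_le d x j).trans (le_max_right _ _)
  have hterm : ∀ m ∈ P.support,
      ‖P.coeff m • ∑ i : Fin d, (∏ j ∈ Finset.univ.erase i, (x j) ^ (m j)) •
        (((m i : ℝ) * (x i) ^ (m i - 1)) •
          (EuclideanSpace.proj i : EuclideanSpace ℝ (Fin d) →L[ℝ] ℝ))‖
      ≤ |P.coeff m| * ((p : ℝ) * M ^ (p - 1)) := by
    intro m hm
    rw [norm_smul_clm]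
    refine mul_le_mul_of_nonneg_left ?_ (abs_nonneg _)
    refine (norm_sum_le _ _).trans ?_
    have hper : ∀ i : Fin d,
        ‖(∏ j ∈ Finset.univ.erase i, (x j) ^ (m j)) •
          (((m i : ℝ) * (x i) ^ (m i - 1)) •
            (EuclideanSpace.proj i : EuclideanSpace ℝ (Fin d) →L[ℝ] ℝ))‖
        ≤ (m i : ℝ) * M ^ (p - 1) := by
      intro i
      rw [norm_smul_clm, norm_smul_clm]
      rcases Nat.eq_zero_or_pos (m i) with h0 | hpos
      · simp [h0]
      · have hb1 : |∏ j ∈ Finset.univ.erase i, (x j) ^ (m j)|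
            ≤ ∏ j ∈ Finset.univ.erase i, M ^ (m j) := by
          rw [Finset.abs_prod]
          refine Finset.prod_le_prod (fun j _ => abs_nonneg _) fun j _ => ?_
          rw [abs_pow]
          exact pow_le_pow_left₀ (abs_nonneg _) (hxM j) _
        have hb2 : |(m i : ℝ) * (x i) ^ (m i - 1)| ≤ (m i : ℝ) * M ^ (m i - 1) := by
          rw [abs_mul, abs_pow, Nat.abs_cast]
          refine mul_le_mul_of_nonneg_left ?_ (Nat.cast_nonneg _)
          exact pow_le_pow_left₀ (abs_nonneg _) (hxM i) _
        have hprodM : (∏ j ∈ Finset.univ.erase i, M ^ (m j)) * M ^ (m i - 1)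
            = M ^ ((∑ j ∈ Finset.univ.erase i, m j) + (m i - 1)) := by
          rw [Finset.prod_pow_eq_pow_sum, pow_add]
        have hexp : (∑ j ∈ Finset.univ.erase i, m j) + (m i - 1) ≤ p - 1 := by
          have hsum : (∑ j ∈ Finset.univ.erase i, m j) + m i = ∑ j : Fin d, m j :=
            Finset.sum_erase_add _ _ (mem_univ i)
          have := sum_coords_le d p P hdeg hm
          omega
        have hMle : M ^ ((∑ j ∈ Finset.univ.erase i, m j) + (m i - 1)) ≤ M ^ (p - 1) :=
          pow_le_pow_right₀ hM1 hexp
        calc |∏ j ∈ Finset.univ.erase i, (x j) ^ (m j)| * (|(m i : ℝ) * (x i) ^ (m i - 1)| *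
              ‖(EuclideanSpace.proj i : EuclideanSpace ℝ (Fin d) →L[ℝ] ℝ)‖)
            ≤ |∏ j ∈ Finset.univ.erase i, (x j) ^ (m j)| *
              (|(m i : ℝ) * (x i) ^ (m i - 1)| * 1) := by
              refine mul_le_mul_of_nonneg_left
                (mul_le_mul_of_nonneg_left (norm_proj_le d i) (abs_nonneg _)) (abs_nonneg _)
          _ = |∏ j ∈ Finset.univ.erase i, (x j) ^ (m j)| * |(m i : ℝ) * (x i) ^ (m i - 1)| := by
              ring
          _ ≤ (∏ j ∈ Finset.univ.erase i, M ^ (m j)) * ((m i : ℝ) * M ^ (m i - 1)) := by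
              refine mul_le_mul hb1 hb2 (abs_nonneg _) ?_
              exact Finset.prod_nonneg fun j _ => pow_nonneg hM0 _
          _ = (m i : ℝ) * ((∏ j ∈ Finset.univ.erase i, M ^ (m j)) * M ^ (m i - 1)) := by ring
          _ = (m i : ℝ) * M ^ ((∑ j ∈ Finset.univ.erase i, m j) + (m i - 1)) := by
              rw [hprodM]
          _ ≤ (m i : ℝ) * M ^ (p - 1) :=
              mul_le_mul_of_nonneg_left hMle (Nat.cast_nonneg _)
    calc ∑ i : Fin d, ‖(∏ j ∈ Finset.univ.erase i, (x j) ^ (m j)) •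
          (((m i : ℝ) * (x i) ^ (m i - 1)) •
            (EuclideanSpace.proj i : EuclideanSpace ℝ (Fin d) →L[ℝ] ℝ))‖
        ≤ ∑ i : Fin d, (m i : ℝ) * M ^ (p - 1) := Finset.sum_le_sum fun i _ => hper i
      _ = (∑ i : Fin d, (m i : ℝ)) * M ^ (p - 1) := by rw [Finset.sum_mul]
      _ ≤ (p : ℝ) * M ^ (p - 1) := by
          refine mul_le_mul_of_nonneg_right ?_ (pow_nonneg hM0 _)
          have := sum_coords_le d p P hdeg hm
          exact_mod_cast Nat.cast_le.mpr this
  calc ‖polyDeriv d P x‖ ≤ ∑ m ∈ P.support, ‖P.coeff m •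
        ∑ i : Fin d, (∏ j ∈ Finset.univ.erase i, (x j) ^ (m j)) •
          (((m i : ℝ) * (x i) ^ (m i - 1)) •
            (EuclideanSpace.proj i : EuclideanSpace ℝ (Fin d) →L[ℝ] ℝ))‖ := norm_sum_le _ _
    _ ≤ ∑ m ∈ P.support, |P.coeff m| * ((p : ℝ) * M ^ (p - 1)) := Finset.sum_le_sum hterm
    _ = ((p : ℝ) * ∑ m ∈ P.support, |P.coeff m|) * M ^ (p - 1) := by
        rw [← Finset.sum_mul]; ring

lemma polyDeriv_continuous (d : ℕ) (P : MvPolynomial (Fin d) ℝ) :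
    Continuous fun x : EuclideanSpace ℝ (Fin d) => polyDeriv d P x := by
  unfold polyDeriv
  refine continuous_finset_sum _ fun m _ => Continuous.fun_const_smul ?_ _
  refine continuous_finset_sum _ fun i _ => Continuous.fun_smul ?_ (Continuous.fun_smul ?_ continuous_const)
  · exact continuous_finset_prod _ fun j _ =>
      ((EuclideanSpace.proj (𝕜 := ℝ) j).continuous.pow _)
  · exact continuous_const.mul ((EuclideanSpace.proj (𝕜 := ℝ) i).continuous.pow _)

lemma normPow_hasFDerivAt {E : Type*} [NormedAddCommGroup E] [InnerProductSpace ℝ E]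
    (p : ℕ) (hp : 1 ≤ p) (σ : ℝ) (x : E) :
    HasFDerivAt (fun y : E => σ / ((p : ℝ) + 1) * ‖y‖ ^ (p + 1))
      ((σ / ((p : ℝ) + 1)) • ((((p : ℝ) + 1) * ‖x‖ ^ ((p : ℝ) + 1 - 2)) • innerSL ℝ x)) x := by
  have h1 : (1:ℝ) < (p : ℝ) + 1 := by
    have : (1:ℝ) ≤ (p : ℝ) := by exact_mod_cast hp
    linarith
  have h := (hasFDerivAt_norm_rpow x h1).const_mul (σ / ((p : ℝ) + 1))
  have hfun : (fun y : E => σ / ((p : ℝ) + 1) * ‖y‖ ^ (p + 1))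
      = fun y : E => σ / ((p : ℝ) + 1) * ‖y‖ ^ ((p : ℝ) + 1) := by
    funext y
    rw [← Real.rpow_natCast ‖y‖ (p + 1)]
    push_cast
    ring_nf
  rw [hfun]
  exact h

lemma normPow_deriv_norm {E : Type*} [NormedAddCommGroup E] [InnerProductSpace ℝ E]
    (p : ℕ) (hp : 1 ≤ p) (σ : ℝ) (hσ : 0 ≤ σ) (x : E) :
    ‖(σ / ((p : ℝ) + 1)) • ((((p : ℝ) + 1) * ‖x‖ ^ ((p : ℝ) + 1 - 2)) • innerSL ℝ x)‖
      = σ * ‖x‖ ^ p := by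
  have hp1 : (0:ℝ) < (p : ℝ) + 1 := by positivity
  rw [norm_smul_clm, norm_smul_clm, innerSL_apply_norm,
    abs_of_nonneg (div_nonneg hσ hp1.le),
    abs_of_nonneg (by positivity : (0:ℝ) ≤ ((p : ℝ) + 1) * ‖x‖ ^ ((p : ℝ) + 1 - 2))]
  rcases eq_or_ne x 0 with h | h
  · subst h
    rw [norm_zero, mul_zero, mul_zero, zero_pow (by omega : p ≠ 0), mul_zero]
  · have hx : (0:ℝ) < ‖x‖ := norm_pos_iff.mpr h
    have e1 : ‖x‖ ^ ((p : ℝ) + 1 - 2) * ‖x‖ = ‖x‖ ^ (p : ℕ) := by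
      rw [show ((p : ℝ) + 1 - 2) = (p : ℝ) - 1 by ring, Real.rpow_sub_one hx.ne' (p : ℝ),
        div_mul_cancel₀ _ hx.ne', Real.rpow_natCast]
    calc σ / ((p : ℝ) + 1) * (((p : ℝ) + 1) * ‖x‖ ^ ((p : ℝ) + 1 - 2) * ‖x‖)
        = σ * (‖x‖ ^ ((p : ℝ) + 1 - 2) * ‖x‖) := by field_simp
      _ = σ * ‖x‖ ^ (p : ℕ) := by rw [e1]

theorem stmt_3 (d p : ℕ) (P : MvPolynomial (Fin d) ℝ)
    (t : EuclideanSpace ℝ (Fin d) → ℝ)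
    (ht : ∀ x, t x = MvPolynomial.eval (fun i => x i) P)
    (hdeg : P.totalDegree = p)
    (hg0 : gradient t 0 ≠ 0)
    (I : Set ℝ) (hInonempty : I.Nonempty) (hI0 : I ⊆ Set.Ici 0) (hIconn : I.OrdConnected)
    (ψ : ℝ → EuclideanSpace ℝ (Fin d))
    (hcont : ContinuousOn ψ I)
    (hmin : ∀ σ ∈ I, IsLocalMin (fun x => t x + σ / ((p : ℝ) + 1) * ‖x‖ ^ (p + 1)) (ψ σ))
    (hmax : ∀ (J : Set ℝ) (φ : ℝ → EuclideanSpace ℝ (Fin d)),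
      J ⊆ Set.Ici 0 → J.OrdConnected → I ⊆ J → ContinuousOn φ J →
      (∀ σ ∈ J, IsLocalMin (fun x => t x + σ / ((p : ℝ) + 1) * ‖x‖ ^ (p + 1)) (φ σ)) →
      (∀ σ ∈ I, φ σ = ψ σ) → J = I) :
    ((∃ c : ℝ, 0 ≤ c ∧ Set.Ioi c ⊆ I) ↔
      ((∃ c : ℝ, 0 ≤ c ∧ Set.Ioi c ⊆ I) ∧ Filter.Tendsto ψ Filter.atTop (nhds 0))) ∧
    ((∃ c : ℝ, 0 ≤ c ∧ Set.Ioi c ⊆ I) ↔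
      sInf ((fun σ => ‖ψ σ‖) '' I) = 0) := by
  have htf : t = fun y : EuclideanSpace ℝ (Fin d) => MvPolynomial.eval (fun i => y i) P :=
    funext ht
  simp only [htf] at hmin hg0
  have hL := polyDeriv_hasFDerivAt d P
  -- p ≥ 1
  have hp1 : 1 ≤ p := by
    by_contra hcon
    have hp0 : p = 0 := by omega
    have hz : polyDeriv d P (0 : EuclideanSpace ℝ (Fin d)) = 0 := by
      unfold polyDeriv
      refine Finset.sum_eq_zero fun m hm => ?_
      have hms : (∑ j : Fin d, m j) = 0 := by
        have := sum_coords_le d p P hdeg hm; omega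
      have hmi : ∀ i : Fin d, m i = 0 := by
        intro i
        have : m i ≤ ∑ j : Fin d, m j :=
          Finset.single_le_sum (f := fun j => m j) (fun _ _ => Nat.zero_le _) (mem_univ i)
        omega
      rw [Finset.sum_eq_zero, smul_zero]
      intro i _
      rw [hmi i]
      simp
    refine hg0 ?_
    show (InnerProductSpace.toDual ℝ _).symm (fderiv ℝ _ 0) = 0
    rw [(hL 0).fderiv, hz, map_zero]
  -- the key stationarity identity
  have key : ∀ σ ∈ I, ‖polyDeriv d P (ψ σ)‖ = σ * ‖ψ σ‖ ^ p := by
    intro σ hσ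
    have hσ0 : (0:ℝ) ≤ σ := hI0 hσ
    have h3 : HasFDerivAt
        (fun x : EuclideanSpace ℝ (Fin d) =>
          MvPolynomial.eval (fun i => x i) P + σ / ((p : ℝ) + 1) * ‖x‖ ^ (p + 1))
        (polyDeriv d P (ψ σ) +
          (σ / ((p : ℝ) + 1)) •
            ((((p : ℝ) + 1) * ‖ψ σ‖ ^ ((p : ℝ) + 1 - 2)) • innerSL ℝ (ψ σ))) (ψ σ) :=
      (hL (ψ σ)).add (normPow_hasFDerivAt p hp1 σ (ψ σ))
    have h4 := (hmin σ hσ).fderiv_eq_zero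
    have h5 : polyDeriv d P (ψ σ) +
        (σ / ((p : ℝ) + 1)) •
          ((((p : ℝ) + 1) * ‖ψ σ‖ ^ ((p : ℝ) + 1 - 2)) • innerSL ℝ (ψ σ)) = 0 := by
      rw [← h3.fderiv]; exact h4
    have h6 : polyDeriv d P (ψ σ) =
        -((σ / ((p : ℝ) + 1)) •
          ((((p : ℝ) + 1) * ‖ψ σ‖ ^ ((p : ℝ) + 1 - 2)) • innerSL ℝ (ψ σ))) :=
      eq_neg_of_add_eq_zero_left h5
    rw [h6, norm_neg]
    exact normPow_deriv_norm p hp1 σ hσ0 (ψ σ)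
  -- positivity of the gradient at 0
  have hκ : 0 < ‖polyDeriv d P 0‖ := by
    rw [norm_pos_iff]
    intro hz
    refine hg0 ?_
    show (InnerProductSpace.toDual ℝ _).symm (fderiv ℝ _ 0) = 0
    rw [(hL 0).fderiv, hz, map_zero]
  set κ := ‖polyDeriv d P 0‖ with hκdef
  -- continuity near 0
  have hcont0 : ∃ δ > 0, ∀ x : EuclideanSpace ℝ (Fin d), ‖x‖ < δ → κ / 2 < ‖polyDeriv d P x‖ := by
    have hc : Continuous fun x : EuclideanSpace ℝ (Fin d) => ‖polyDeriv d P x‖ :=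
      (polyDeriv_continuous d P).norm
    have h1 : ∀ᶠ x in nhds (0 : EuclideanSpace ℝ (Fin d)), κ / 2 < ‖polyDeriv d P x‖ :=
      (hc.tendsto 0).eventually (eventually_gt_nhds (half_lt_self hκ))
    rw [Metric.eventually_nhds_iff] at h1
    obtain ⟨δ, hδ0, hδ⟩ := h1
    exact ⟨δ, hδ0, fun x hx => hδ (by rwa [dist_zero_right])⟩
  set C : ℝ := (p : ℝ) * ∑ m ∈ P.support, |P.coeff m| with hCdef
  have hC0 : 0 ≤ C := by
    refine mul_nonneg (Nat.cast_nonneg _) (Finset.sum_nonneg fun m _ => abs_nonneg _)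
  have grow : ∀ x : EuclideanSpace ℝ (Fin d),
      ‖polyDeriv d P x‖ ≤ C * max 1 ‖x‖ ^ (p - 1) := polyDeriv_norm_le d p P hdeg
  -- unboundedness of I from small norms
  have unbounded : sInf ((fun σ => ‖ψ σ‖) '' I) = 0 → ∀ N : ℝ, ∃ σ ∈ I, N < σ := by
    intro hS N
    obtain ⟨δ, hδ0, hδ⟩ := hcont0
    set Q : ℝ := max N 1 + 1 with hQdef
    have hQ1 : (1:ℝ) ≤ Q := by
      have := le_max_right N 1; linarith
    have hQN : N < Q := by
      have := le_max_left N 1; linarith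
    set ε : ℝ := min δ (min 1 (κ / (2 * Q))) with hεdef
    have hε0 : 0 < ε := by
      refine lt_min hδ0 (lt_min one_pos ?_)
      have : (0:ℝ) < 2 * Q := by linarith
      positivity
    have hne : ((fun σ => ‖ψ σ‖) '' I).Nonempty := hInonempty.image _
    have hexists : ∃ y ∈ (fun σ => ‖ψ σ‖) '' I, y < ε := by
      by_contra hcon
      push_neg at hcon
      have : ε ≤ sInf ((fun σ => ‖ψ σ‖) '' I) := le_csInf hne hcon
      rw [hS] at this
      linarith
    obtain ⟨y, ⟨σ, hσI, rfl⟩, hy⟩ := hexists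
    refine ⟨σ, hσI, ?_⟩
    have hσ0 : (0:ℝ) ≤ σ := hI0 hσI
    have hk := key σ hσI
    have h1 : ‖ψ σ‖ < δ := lt_of_lt_of_le hy (min_le_left _ _)
    have h2 : κ / 2 < σ * ‖ψ σ‖ ^ p := by rw [← hk]; exact hδ _ h1
    have hψpos : 0 < ‖ψ σ‖ := by
      rcases (norm_nonneg (ψ σ)).lt_or_eq with h | h
      · exact h
      · exfalso
        rw [← h, zero_pow (by omega : p ≠ 0), mul_zero] at h2
        linarith
    have hψ1 : ‖ψ σ‖ ≤ 1 := le_trans hy.le (le_trans (min_le_right _ _) (min_le_left _ _))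
    have h3 : ‖ψ σ‖ ^ p ≤ ‖ψ σ‖ := pow_le_of_le_one hψpos.le hψ1 (by omega)
    have h4 : κ / 2 < σ * ‖ψ σ‖ := lt_of_lt_of_le h2 (by nlinarith)
    have h5 : ‖ψ σ‖ ≤ κ / (2 * Q) :=
      le_trans hy.le (le_trans (min_le_right _ _) (min_le_right _ _))
    -- σ > (κ/2) / ‖ψ σ‖ ≥ (κ/2) / (κ/(2Q)) = Q > N
    have h6 : Q * ‖ψ σ‖ ≤ κ / 2 := by
      rw [le_div_iff₀ (by linarith : (0:ℝ) < 2 * Q)] at h5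
      nlinarith
    have h7 : Q * ‖ψ σ‖ < σ * ‖ψ σ‖ := lt_of_le_of_lt h6 h4
    have h8 : Q < σ := lt_of_mul_lt_mul_right (by nlinarith) hψpos.le
    exact lt_trans hQN h8
  -- persistence implies convergence to zero
  have tendsto_of_A : (∃ c : ℝ, 0 ≤ c ∧ Set.Ioi c ⊆ I) →
      Filter.Tendsto ψ Filter.atTop (nhds 0) := by
    rintro ⟨c, hc0, hcI⟩
    rw [NormedAddCommGroup.tendsto_nhds_zero]
    intro ε hε
    set ε' : ℝ := min ε 1 with hε'def
    have hε'0 : 0 < ε' := lt_min hε one_pos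
    have hε'1 : ε' ≤ 1 := min_le_right _ _
    rw [Filter.eventually_atTop]
    refine ⟨max (c + 1) (max (C + 1) (C / ε' ^ p + 1)), fun σ hσ => ?_⟩
    have hσc : c < σ := by
      have := le_max_left (c + 1) (max (C + 1) (C / ε' ^ p + 1)); linarith
    have hσI : σ ∈ I := hcI hσc
    have hσC : C < σ := by
      have h1 := le_max_right (c + 1) (max (C + 1) (C / ε' ^ p + 1))
      have h2 := le_max_left (C + 1) (C / ε' ^ p + 1)
      linarith
    have hσC2 : C / ε' ^ p < σ := by
      have h1 := le_max_right (c + 1) (max (C + 1) (C / ε' ^ p + 1))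
      have h2 := le_max_right (C + 1) (C / ε' ^ p + 1)
      linarith
    have hσ0 : (0:ℝ) < σ := lt_of_le_of_lt hc0 hσc
    have hk := key σ hσI
    have hgrow := grow (ψ σ)
    have hr0 : (0:ℝ) ≤ ‖ψ σ‖ := norm_nonneg _
    by_cases h1r : 1 ≤ ‖ψ σ‖
    · exfalso
      rw [max_eq_right h1r] at hgrow
      have hle : σ * ‖ψ σ‖ ^ p ≤ C * ‖ψ σ‖ ^ (p - 1) := by rw [← hk]; exact hgrow
      have hrp : ‖ψ σ‖ ^ p = ‖ψ σ‖ ^ (p - 1) * ‖ψ σ‖ := by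
        rw [← pow_succ]
        congr 1
        omega
      have hrp1 : (0:ℝ) < ‖ψ σ‖ ^ (p - 1) := pow_pos (lt_of_lt_of_le one_pos h1r) _
      have h6 : σ * ‖ψ σ‖ ≤ C := by
        rw [hrp] at hle
        have : (σ * ‖ψ σ‖) * ‖ψ σ‖ ^ (p - 1) ≤ C * ‖ψ σ‖ ^ (p - 1) := by nlinarith
        exact le_of_mul_le_mul_right this hrp1
      have h7 : σ ≤ C := le_trans (le_mul_of_one_le_right hσ0.le h1r) h6
      linarith
    · push_neg at h1r
      rw [max_eq_left h1r.le, one_pow, mul_one] at hgrow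
      have h7 : σ * ‖ψ σ‖ ^ p ≤ C := by rw [← hk]; exact hgrow
      have hεp : (0:ℝ) < ε' ^ p := pow_pos hε'0 _
      have h8 : ‖ψ σ‖ ^ p < ε' ^ p := by
        have ha : ‖ψ σ‖ ^ p ≤ C / σ := (le_div_iff₀ hσ0).mpr (by nlinarith)
        have hb : C / σ < ε' ^ p := by
          rw [div_lt_iff₀ hσ0]
          have : C / ε' ^ p * ε' ^ p < σ * ε' ^ p := mul_lt_mul_of_pos_right hσC2 hεp
          rw [div_mul_cancel₀ _ hεp.ne'] at this
          nlinarith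
        linarith
      have h9 : ‖ψ σ‖ < ε' := by
        by_contra hcon
        push_neg at hcon
        exact absurd h8 (not_lt.mpr (pow_le_pow_left₀ hε'0.le hcon p))
      exact lt_of_lt_of_le h9 (min_le_left _ _)
  -- persistence from unboundedness
  have IoiSub : (∀ N : ℝ, ∃ σ ∈ I, N < σ) → ∃ c : ℝ, 0 ≤ c ∧ Set.Ioi c ⊆ I := by
    intro h
    obtain ⟨a, ha⟩ := hInonempty
    refine ⟨a, hI0 ha, fun x hx => ?_⟩
    obtain ⟨σ, hσI, hσx⟩ := h x
    exact hIconn.out ha hσI ⟨le_of_lt hx, le_of_lt hσx⟩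
  -- persistence implies the infimum is zero
  have S_of_A : (∃ c : ℝ, 0 ≤ c ∧ Set.Ioi c ⊆ I) → sInf ((fun σ => ‖ψ σ‖) '' I) = 0 := by
    intro hA
    have hT := tendsto_of_A hA
    obtain ⟨c, hc0, hcI⟩ := hA
    have hne : ((fun σ => ‖ψ σ‖) '' I).Nonempty := hInonempty.image _
    have hbdd : BddBelow ((fun σ => ‖ψ σ‖) '' I) := by
      refine ⟨0, ?_⟩
      rintro y ⟨σ, hσ, rfl⟩
      exact norm_nonneg _
    refine le_antisymm ?_ (le_csInf hne ?_)
    · by_contra hcon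
      push_neg at hcon
      rw [NormedAddCommGroup.tendsto_nhds_zero] at hT
      obtain ⟨σ₀, hσ₀⟩ := Filter.eventually_atTop.mp (hT _ hcon)
      set σ : ℝ := max σ₀ (c + 1) with hσdef
      have hσI : σ ∈ I := hcI (lt_of_lt_of_le (lt_add_one c) (le_max_right _ _))
      have hlt : ‖ψ σ‖ < sInf ((fun σ => ‖ψ σ‖) '' I) := hσ₀ σ (le_max_left _ _)
      have hge : sInf ((fun σ => ‖ψ σ‖) '' I) ≤ ‖ψ σ‖ := csInf_le hbdd ⟨σ, hσI, rfl⟩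
      linarith
    · rintro y ⟨σ, hσ, rfl⟩
      exact norm_nonneg _
  exact ⟨⟨fun hA => ⟨hA, tendsto_of_A hA⟩, fun h => h.1⟩,
    ⟨S_of_A, fun hS => IoiSub (unbounded hS)⟩⟩
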